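/- arXiv:2312.07817 — 10 statements merged into one kernel-verified Lean document; each statement's English description precedes it below -/
import Mathlib

section
/- Let p, q, r, t, u be positive real numbers with p·r ≥ t², and let k be a real number with 0 ≤ k ≤ 2qu/(pu + qr). Then the symmetric 2×2 real matrix with rows (2q − pk, −tk) and (−tk, 2u − rk) is positive semidefinite. -/
/-- Algebraic core of the bound `M₁ + M₂ ⪰ k·E`: for positive `p q r t u` with
`p r ≥ t²` and `0 ≤ k ≤ 2qu/(pu + qr)`, the matrix `[[2q − pk, −tk], [−tk, 2u − rk]]`
is positive semidefinite. -/
theorem posSemidef_lower_block (p q r t u k : ℝ)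
    (hp : 0 < p) (hq : 0 < q) (hr : 0 < r) (ht : 0 < t) (hu : 0 < u)
    (hprt : p * r ≥ t ^ 2) (hk0 : 0 ≤ k) (hk : k ≤ 2 * q * u / (p * u + q * r)) :
    Matrix.PosSemidef !![2 * q - p * k, -(t * k); -(t * k), 2 * u - r * k] := by
  have hd : (0:ℝ) < p * u + q * r := by positivity
  have hk' : k * (p * u + q * r) ≤ 2 * q * u := (le_div_iff₀ hd).mp hk
  have hkqr : 0 ≤ k * (q * r) := by positivity
  have hkpu : 0 ≤ k * (p * u) := by positivity
  have ha : 0 ≤ 2 * q - p * k := by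
    have h1 : p * k * u ≤ 2 * q * u := by nlinarith
    have h2 : p * k ≤ 2 * q := le_of_mul_le_mul_right (by linarith) hu
    linarith
  have hc : 0 ≤ 2 * u - r * k := by
    have h1 : r * k * q ≤ 2 * u * q := by nlinarith
    have h2 : r * k ≤ 2 * u := le_of_mul_le_mul_right (by linarith) hq
    linarith
  have hdet : (t * k) ^ 2 ≤ (2 * q - p * k) * (2 * u - r * k) := by
    nlinarith [sq_nonneg k]
  rw [Matrix.posSemidef_iff_dotProduct_mulVec]
  constructor
  · ext i j
    fin_cases i <;> fin_cases j <;> simp [Matrix.conjTranspose_apply]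
  · intro x
    have heq : dotProduct (star x)
        (!![2 * q - p * k, -(t * k); -(t * k), 2 * u - r * k].mulVec x) =
        (2 * q - p * k) * (x 0)^2 - 2 * (t * k) * (x 0) * (x 1)
          + (2 * u - r * k) * (x 1)^2 := by
      simp [dotProduct, Matrix.mulVec, Fin.sum_univ_two]
      ring
    rw [heq]
    rcases eq_or_lt_of_le ha with h | h
    · have htk : t * k = 0 := by nlinarith [sq_nonneg (t * k)]
      have : (2 * q - p * k) * x 0 ^ 2 = 0 := by rw [← h]; ring
      nlinarith [mul_nonneg hc (sq_nonneg (x 1))]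
    · nlinarith [sq_nonneg ((2 * q - p * k) * x 0 - t * k * x 1),
        mul_le_mul_of_nonneg_right hdet (sq_nonneg (x 1)), sq_nonneg (x 1), h]
end

section
/- Let p, q, r, t, u be positive real numbers with p·r > t², and let k be a real number with k ≥ 2(pu + qr)/(pr − t²). Then the symmetric 2×2 real matrix with rows (pk − 2q, tk) and (tk, rk − 2u) is positive semidefinite. -/
/-- Algebraic core of the bound `M₃ ⪰ −k·E`: for positive `p q r t u` with
`p r > t²` and `k ≥ 2(pu + qr)/(pr − t²)`, the matrix `[[pk − 2q, tk], [tk, rk − 2u]]`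
is positive semidefinite. -/
theorem posSemidef_error_block (p q r t u k : ℝ)
    (hp : 0 < p) (hq : 0 < q) (hr : 0 < r) (ht : 0 < t) (hu : 0 < u)
    (hprt : p * r > t ^ 2) (hk : k ≥ 2 * (p * u + q * r) / (p * r - t ^ 2)) :
    Matrix.PosSemidef !![p * k - 2 * q, t * k; t * k, r * k - 2 * u] := by
  have hd : 0 < p * r - t ^ 2 := by linarith
  have hk' : k * (p * r - t ^ 2) ≥ 2 * (p * u + q * r) := by
    rw [ge_iff_le, div_le_iff₀ hd] at hk
    linarith
  have hkpos : 0 < k := by nlinarith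
  have ha : 0 < p * k - 2 * q := by nlinarith
  have hdet : 0 ≤ (p * k - 2 * q) * (r * k - 2 * u) - (t * k) ^ 2 := by nlinarith
  rw [Matrix.posSemidef_iff_dotProduct_mulVec]
  constructor
  · ext i j
    fin_cases i <;> fin_cases j <;> simp [Matrix.conjTranspose_apply]
  · intro x
    have key : 0 ≤ (p * k - 2 * q) * ((p * k - 2 * q) * x 0 ^ 2
        + 2 * (t * k) * x 0 * x 1 + (r * k - 2 * u) * x 1 ^ 2) := by
      have : (p * k - 2 * q) * ((p * k - 2 * q) * x 0 ^ 2
          + 2 * (t * k) * x 0 * x 1 + (r * k - 2 * u) * x 1 ^ 2)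
          = ((p * k - 2 * q) * x 0 + t * k * x 1) ^ 2
            + ((p * k - 2 * q) * (r * k - 2 * u) - (t * k) ^ 2) * x 1 ^ 2 := by ring
      rw [this]
      positivity
    have := nonneg_of_mul_nonneg_right key ha
    simp [dotProduct, Matrix.mulVec, Fin.sum_univ_two]
    nlinarith [this]
end

section
/- Let s > 0 and let t be a real number with 0 < t < s². Then (2/s) · (t − t²/s²)/(1 + t − t²/s²) ≤ 2s/(4 + s²) ≤ 1/2. Moreover, (2/s) · (t − t²/s²)/(1 + t − t²/s²) = 1/2 holds if and only if s = 2 and t = 2. -/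
/-- The friction scaling `s = 2` is optimal: for `s > 0` and `0 < t < s²`,
`(2/s)·(t − t²/s²)/(1 + t − t²/s²) ≤ 2s/(4 + s²) ≤ 1/2`, with equality `= 1/2`
precisely when `s = 2` and `t = 2`. -/
theorem optimal_friction_scaling (s t : ℝ) (hs : 0 < s) (ht0 : 0 < t) (hts : t < s ^ 2) :
    (2 / s) * (t - t ^ 2 / s ^ 2) / (1 + t - t ^ 2 / s ^ 2) ≤ 2 * s / (4 + s ^ 2) ∧
    2 * s / (4 + s ^ 2) ≤ 1 / 2 ∧
    ((2 / s) * (t - t ^ 2 / s ^ 2) / (1 + t - t ^ 2 / s ^ 2) = 1 / 2 ↔ s = 2 ∧ t = 2) := by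
  have hs2 : (0:ℝ) < s ^ 2 := by positivity
  have hu : 0 < t - t ^ 2 / s ^ 2 := by
    rw [sub_pos, div_lt_iff₀ hs2]
    nlinarith
  have hden : 0 < 1 + t - t ^ 2 / s ^ 2 := by linarith
  have hden2 : (0:ℝ) < 4 + s ^ 2 := by positivity
  have h1 : (2 / s) * (t - t ^ 2 / s ^ 2) / (1 + t - t ^ 2 / s ^ 2) ≤ 2 * s / (4 + s ^ 2) := by
    rw [div_le_div_iff₀ hden hden2]
    have key : 4 * (t - t ^ 2 / s ^ 2) ≤ s ^ 2 := by
      have e : t - t ^ 2 / s ^ 2 = t * (s ^ 2 - t) / s ^ 2 := by field_simp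
      rw [e, mul_div_assoc', div_le_iff₀ hs2]
      nlinarith [sq_nonneg (s ^ 2 - 2 * t)]
    have h2s : (2 / s) * (t - t ^ 2 / s ^ 2) = 2 * (t - t ^ 2 / s ^ 2) / s := by ring
    rw [h2s, div_mul_eq_mul_div, div_le_iff₀ hs]
    nlinarith [mul_pos hu hs]
  have h2 : 2 * s / (4 + s ^ 2) ≤ 1 / 2 := by
    rw [div_le_div_iff₀ hden2 (by norm_num : (0:ℝ) < 2)]
    nlinarith [sq_nonneg (s - 2)]
  refine ⟨h1, h2, ?_, ?_⟩
  · intro h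
    have hseq : 2 * s / (4 + s ^ 2) = 1 / 2 := le_antisymm h2 (h ▸ h1)
    have hs2' : s = 2 := by
      rw [div_eq_div_iff (ne_of_gt hden2) (by norm_num : (2:ℝ) ≠ 0)] at hseq
      nlinarith [sq_nonneg (s - 2)]
    subst hs2'
    refine ⟨rfl, ?_⟩
    rw [div_eq_div_iff (ne_of_gt hden) (by norm_num : (2:ℝ) ≠ 0)] at h
    norm_num at h
    nlinarith [sq_nonneg (t - 2)]
  · rintro ⟨rfl, rfl⟩
    norm_num
end

section
/- For all real numbers ε > 0 and α > 0, one has ( ((ε² + 3ε + 2)/((201/50)·ε)) · √α + √2 · ε ) · (α + 1) ≥ 4α. -/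
/-- Key elementary inequality for the DMS rate comparison:
`((ε² + 3ε + 2)/(4.02·ε)·√α + √2·ε)·(α + 1) ≥ 4α` for all `ε > 0`, `α > 0`. -/
theorem dms_key_inequality (ε α : ℝ) (hε : 0 < ε) (hα : 0 < α) :
    ((ε ^ 2 + 3 * ε + 2) / ((201 / 50) * ε) * Real.sqrt α + Real.sqrt 2 * ε) * (α + 1)
      ≥ 4 * α := by
  set s := Real.sqrt α with hsdef
  set q := Real.sqrt 2 with hqdef
  have hs : 0 < s := Real.sqrt_pos.mpr hα
  have hs2 : s ^ 2 = α := Real.sq_sqrt hα.le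
  have hq2 : q ^ 2 = 2 := Real.sq_sqrt (by norm_num)
  have hq0 : 0 < q := Real.sqrt_pos.mpr (by norm_num)
  have hq : q ≥ 1.09 := by
    nlinarith [hq2, hq0]
  have hd : (0:ℝ) < (201 / 50) * ε := by positivity
  -- key quadratic in ε
  have h2 : (2 + (201/50) * q) * ε ^ 2 - (504/50) * ε + 4 ≥ 0 := by
    nlinarith [sq_nonneg ((2 + (201/50) * q) * ε - 252/50), hq, hq2, sq_nonneg ε]
  rw [ge_iff_le, div_mul_eq_mul_div, ← sub_nonneg]
  have key : ((ε ^ 2 + 3 * ε + 2) * s / ((201 / 50) * ε) + q * ε) * (α + 1) - 4 * α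
      = (((ε ^ 2 + 3 * ε + 2) * s + q * ε * ((201/50) * ε)) * (s ^ 2 + 1)
          - 4 * s ^ 2 * ((201/50) * ε)) / ((201/50) * ε) := by
    rw [← hs2]
    field_simp
  rw [key]
  apply div_nonneg _ hd.le
  nlinarith [mul_nonneg (mul_nonneg (by positivity : (0:ℝ) ≤ ε ^ 2 + 3 * ε + 2) hs.le)
      (sq_nonneg (s - 1)),
    mul_nonneg (sq_nonneg s) h2,
    mul_nonneg (mul_nonneg hq0.le (sq_nonneg ε)) (sq_nonneg s)]
end

section
/- Let λ > 0, α > 0, and ε ∈ (0,1), and define λ_DMS = ( λ − ε/(1+α) − √( ε²·(√2 + λ/2)² + (λ − (2α+1)ε/(α+1))² ) ) / (2(1+ε)). If λ_DMS > 0, then λ_DMS ≤ (4α/(α+1) − √2·ε) · ε / ((1+ε)(2+ε)). -/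
set_option maxHeartbeats 800000

/-- Intermediate bound on the DMS hypocoercive rate: if
`λ_DMS = (λ − ε/(1+α) − √(ε²(√2 + λ/2)² + (λ − (2α+1)ε/(α+1))²))/(2(1+ε))` is positive,
then `λ_DMS ≤ (4α/(α+1) − √2·ε)·ε/((1+ε)(2+ε))`. -/
theorem dms_rate_intermediate_bound (lam α ε : ℝ) (hlam : 0 < lam) (hα : 0 < α)
    (hε : ε ∈ Set.Ioo (0 : ℝ) 1)
    (hpos : 0 < (lam - ε / (1 + α) -
        Real.sqrt (ε ^ 2 * (Real.sqrt 2 + lam / 2) ^ 2 +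
          (lam - (2 * α + 1) * ε / (α + 1)) ^ 2)) / (2 * (1 + ε))) :
    (lam - ε / (1 + α) -
        Real.sqrt (ε ^ 2 * (Real.sqrt 2 + lam / 2) ^ 2 +
          (lam - (2 * α + 1) * ε / (α + 1)) ^ 2)) / (2 * (1 + ε))
      ≤ (4 * α / (α + 1) - Real.sqrt 2 * ε) * ε / ((1 + ε) * (2 + ε)) := by
  obtain ⟨hε0, hε1⟩ := hε
  have hα1 : (0:ℝ) < α + 1 := by linarith
  set b : ℝ := 1 / (α + 1) with hbdef
  have hbpos : 0 < b := by positivity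
  have hb : (α + 1) * b = 1 := by rw [hbdef]; field_simp
  have e1 : ε / (1 + α) = ε * b := by rw [hbdef]; ring
  have e2 : (2 * α + 1) * ε / (α + 1) = (2*α+1) * ε * b := by rw [hbdef]; ring
  have e3 : 4 * α / (α + 1) = 4 * α * b := by rw [hbdef]; ring
  rw [e1, e2] at hpos ⊢
  rw [e3]
  set s2 := Real.sqrt 2 with hs2def
  have h2 : s2 ^ 2 = 2 := Real.sq_sqrt (by norm_num)
  have hs2pos : 0 < s2 := Real.sqrt_pos.mpr (by norm_num)
  set s := Real.sqrt (ε ^ 2 * (s2 + lam / 2) ^ 2 + (lam - (2 * α + 1) * ε * b) ^ 2) with hsdef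
  have hs0 : 0 ≤ s := Real.sqrt_nonneg _
  have hsq : s ^ 2 = ε ^ 2 * (s2 + lam / 2) ^ 2 + (lam - (2 * α + 1) * ε * b) ^ 2 :=
    Real.sq_sqrt (by positivity)
  have hsge : lam - (2*α+1) * ε * b ≤ s := by
    have h := Real.sqrt_le_sqrt (show (lam - (2*α+1)*ε*b)^2 ≤
        ε ^ 2 * (s2 + lam / 2) ^ 2 + (lam - (2 * α + 1) * ε * b) ^ 2 from
        le_add_of_nonneg_left (by positivity))
    calc lam - (2*α+1)*ε*b ≤ |lam - (2*α+1)*ε*b| := le_abs_self _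
      _ = Real.sqrt ((lam - (2*α+1)*ε*b)^2) := (Real.sqrt_sq_eq_abs _).symm
      _ ≤ s := h
  have hd : (0:ℝ) < 2 * (1 + ε) := by linarith
  have hA : 0 < lam - ε*b - s := by
    have h := mul_pos hpos hd
    rwa [div_mul_cancel₀ _ (ne_of_gt hd)] at h
  have hApos : 0 < lam - ε*b + s := by linarith
  have hAS : (lam - ε*b - s) * (lam - ε*b + s)
      = 4*α*ε*b*(lam - ε) - ε^2*(s2 + lam/2)^2 := by
    linear_combination (-1 : ℝ) * hsq - 4*α*ε^2*b*hb
  have habe : 0 < α * ε * b := by positivity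
  have hupos : 0 < lam - ε := by
    nlinarith [mul_pos hA hApos, sq_nonneg (ε*(s2 + lam/2)), habe]
  have h2e : (2*α+2)*ε*b = 2*ε := by linear_combination 2*ε*hb
  have h2u : 2*(lam - ε) ≤ lam - ε*b + s := by linarith [hsge, h2e]
  have hM : lam - ε*b - s ≤ 2*α*ε*b - ε^2*s2 - ε^3/2 := by
    have h1 : (lam - ε*b - s) * (2*(lam - ε)) ≤ 4*α*ε*b*(lam - ε) - ε^2*(s2 + lam/2)^2 := by
      rw [← hAS]; exact mul_le_mul_of_nonneg_left h2u (le_of_lt hA)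
    have h2' : 4*α*ε*b*(lam - ε) - ε^2*(s2 + lam/2)^2
        ≤ (2*α*ε*b - ε^2*s2 - ε^3/2) * (2*(lam - ε)) := by
      nlinarith [sq_nonneg (ε*(s2 + ε/2 - (lam - ε)/2))]
    have h3 := h1.trans h2'
    exact le_of_mul_le_mul_right h3 (by linarith)
  rw [div_le_div_iff₀ (by linarith) (by positivity)]
  have hfin : (lam - ε*b - s) * ((1+ε)*(2+ε)) ≤ (2*α*ε*b - ε^2*s2 - ε^3/2) * ((1+ε)*(2+ε)) :=
    mul_le_mul_of_nonneg_right hM (by positivity)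
  have hstep : (2*α*ε*b - ε^2*s2 - ε^3/2) * ((1+ε)*(2+ε))
      ≤ (4 * α * b - s2 * ε) * ε * (2 * (1 + ε)) := by
    nlinarith [mul_pos habe hε0,
      mul_pos (mul_pos habe hε0) (show (0:ℝ) < 1 - ε by linarith),
      mul_pos hs2pos (mul_pos (mul_pos hε0 hε0) hε0),
      mul_pos (mul_pos hs2pos (mul_pos (mul_pos hε0 hε0) hε0)) hε0,
      mul_pos (mul_pos hε0 hε0) hε0, mul_pos (mul_pos (mul_pos hε0 hε0) hε0) hε0, habe]
  linarith [hfin, hstep]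
end

section
/- For all real numbers λ > 0, α > 0, and ε ∈ (−1, 1): ( λ − ε/(1+α) − √( ε²·(√2 + λ/2)² + (λ − (2α+1)ε/(α+1))² ) ) / (2(1+|ε|)) ≤ √α / (201/50). -/
private lemma keyL (s e r : ℝ) (hs : 0 < s) (he : 0 < e) (hr : 7/5 ≤ r) :
    4*(2*s^2*e - (2/5)*s*(s^2+1)) ≤
      4*r*e^2*(s^2+1) + e^2*((2*s^2+2)*e + (2/5)*s*(s^2+1)) := by
  nlinarith [mul_nonneg hs.le (sq_nonneg (s-1)), sq_nonneg (s*(7*e-5)),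
    mul_nonneg (mul_nonneg he.le he.le) he.le, sq_nonneg e,
    mul_nonneg (mul_nonneg (sq_nonneg e) hs.le) (sq_nonneg s),
    mul_nonneg (mul_nonneg (mul_nonneg he.le he.le) he.le) (sq_nonneg s),
    mul_nonneg (sub_nonneg.2 hr) (mul_nonneg (sq_nonneg e) (by positivity : (0:ℝ) ≤ s^2+1))]

set_option maxHeartbeats 1000000 in
private lemma key' (s e l r x y : ℝ) (hs : 0 < s) (he : 0 < e)
    (hr2 : r^2 = 2) (hr : 7/5 ≤ r)
    (hx : x*(s^2+1) = e) (hy : y*(s^2+1) = (2*s^2+1)*e)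
    (hl : x + (2/5)*s ≤ l) :
    (l - (x + (2/5)*s))^2 ≤ e^2*(r + l/2)^2 + (l - y)^2 := by
  have hP : (0:ℝ) < s^2 + 1 := by positivity
  rcases le_or_gt (y - (x + (2/5)*s)) 0 with hU | hU
  · nlinarith [mul_nonneg (neg_nonneg.2 hU) (by linarith : (0:ℝ) ≤ 2*l - y - (x + (2/5)*s)),
      sq_nonneg (e*(r+l/2))]
  · have hUe : (y - (x + (2/5)*s))*(s^2+1) = 2*s^2*e - (2/5)*s*(s^2+1) := by
      nlinarith [hx, hy]
    have hyD : (y + (x + (2/5)*s))*(s^2+1) = (2*s^2+2)*e + (2/5)*s*(s^2+1) := by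
      nlinarith [hx, hy]
    have hL : 4*(y - (x + (2/5)*s))*(s^2+1)
        ≤ (4*r*e^2 + e^2*(y + (x + (2/5)*s)))*(s^2+1) := by
      have hk := keyL s e r hs he hr
      nlinarith [hk, hUe, hyD, sq_nonneg e]
    have hL' : 4*(y - (x + (2/5)*s)) ≤ 4*r*e^2 + e^2*(y + (x + (2/5)*s)) :=
      le_of_mul_le_mul_right (by linarith [hL]) hP
    have h2 : (0:ℝ) ≤ (y - (x + (2/5)*s))*(4*r*e^2 + e^2*(y + (x + (2/5)*s))
        - 4*(y - (x + (2/5)*s))) := mul_nonneg hU.le (by linarith)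
    have h4 : (0:ℝ) ≤ e^2 * (e^2*(r + l/2)^2
        - (y - (x + (2/5)*s))*(2*l - y - (x + (2/5)*s))) := by
      have h3 : e^2 * (e^2*(r + l/2)^2
          - (y - (x + (2/5)*s))*(2*l - y - (x + (2/5)*s)))
          = (e^2*l/2 + (r*e^2 - 2*(y - (x + (2/5)*s))))^2
            + (y - (x + (2/5)*s))*(4*r*e^2 + e^2*(y + (x + (2/5)*s))
              - 4*(y - (x + (2/5)*s))) := by ring
      rw [h3]
      nlinarith [sq_nonneg (e^2*l/2 + (r*e^2 - 2*(y - (x + (2/5)*s)))), h2]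
    have he2 : (0:ℝ) < e^2 := by positivity
    have h5 : (0:ℝ) ≤ e^2*(r + l/2)^2
        - (y - (x + (2/5)*s))*(2*l - y - (x + (2/5)*s)) :=
      (mul_nonneg_iff_of_pos_left he2).mp h4
    have hid : e^2*(r + l/2)^2 + (l - y)^2 - (l - (x + (2/5)*s))^2
        = e^2*(r + l/2)^2
          - (y - (x + (2/5)*s))*(2*l - y - (x + (2/5)*s)) := by ring
    linarith [h5, hid]

private lemma key (a s e l r : ℝ) (hs : 0 < s) (hsa : s^2 = a) (he : 0 < e)
    (hr2 : r^2 = 2) (hr : 7/5 ≤ r) (hl : e/(1+a) + (2/5)*s ≤ l) :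
    (l - (e/(1+a) + (2/5)*s))^2 ≤ e^2*(r + l/2)^2 + (l - (2*a+1)*e/(a+1))^2 := by
  subst hsa
  have hP : (0:ℝ) < s^2 + 1 := by positivity
  have hx : (e/(1+s^2))*(s^2+1) = e := by
    rw [show (1:ℝ)+s^2 = s^2+1 by ring, div_mul_cancel₀ _ hP.ne']
  have hy : ((2*s^2+1)*e/(s^2+1))*(s^2+1) = (2*s^2+1)*e := div_mul_cancel₀ _ hP.ne'
  exact key' s e l r (e/(1+s^2)) ((2*s^2+1)*e/(s^2+1)) hs he hr2 hr hx hy hl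

set_option maxHeartbeats 1000000 in
/-- The DMS hypocoercive rate with any constant scalar friction `λ` is at most `√α/4.02`:
for all `λ > 0`, `α > 0`, `ε ∈ (−1, 1)`,
`(λ − ε/(1+α) − √(ε²(√2 + λ/2)² + (λ − (2α+1)ε/(α+1))²))/(2(1+|ε|)) ≤ √α/(201/50)`. -/
theorem dms_rate_upper_bound (lam α ε : ℝ) (hlam : 0 < lam) (hα : 0 < α)
    (hε : ε ∈ Set.Ioo (-1 : ℝ) 1) :
    (lam - ε / (1 + α) -
        Real.sqrt (ε ^ 2 * (Real.sqrt 2 + lam / 2) ^ 2 +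
          (lam - (2 * α + 1) * ε / (α + 1)) ^ 2)) / (2 * (1 + |ε|))
      ≤ Real.sqrt α / (201 / 50) := by
  obtain ⟨hε1, hε2⟩ := hε
  have hs : 0 < Real.sqrt α := Real.sqrt_pos.2 hα
  have hsa : Real.sqrt α ^ 2 = α := Real.sq_sqrt hα.le
  have hr2 : Real.sqrt 2 ^ 2 = 2 := Real.sq_sqrt (by norm_num)
  have hr : (7:ℝ)/5 ≤ Real.sqrt 2 := by
    rw [show (7:ℝ)/5 = Real.sqrt ((7/5)^2) from (Real.sqrt_sq (by norm_num)).symm]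
    exact Real.sqrt_le_sqrt (by norm_num)
  have hA : (0:ℝ) < α + 1 := by linarith
  have hX : (0:ℝ) ≤ ε ^ 2 * (Real.sqrt 2 + lam / 2) ^ 2 +
      (lam - (2 * α + 1) * ε / (α + 1)) ^ 2 := by positivity
  set S := Real.sqrt (ε ^ 2 * (Real.sqrt 2 + lam / 2) ^ 2 +
      (lam - (2 * α + 1) * ε / (α + 1)) ^ 2) with hSdef
  have hS0 : 0 ≤ S := Real.sqrt_nonneg _
  have hS2 : S ^ 2 = ε ^ 2 * (Real.sqrt 2 + lam / 2) ^ 2 +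
      (lam - (2 * α + 1) * ε / (α + 1)) ^ 2 := Real.sq_sqrt hX
  have hN : lam - ε / (1 + α) - S ≤ (2/5) * Real.sqrt α := by
    rcases le_or_gt ε 0 with hε0 | hε0
    · have hcnum : (2 * α + 1) * ε ≤ 0 := by nlinarith
      have hc0 : (2 * α + 1) * ε / (α + 1) ≤ 0 :=
        div_nonpos_iff.2 (Or.inr ⟨hcnum, hA.le⟩)
      have ht0 : 0 ≤ lam - (2 * α + 1) * ε / (α + 1) := by linarith
      have hcS : lam - (2 * α + 1) * ε / (α + 1) ≤ S := by
        nlinarith [hS2, hS0, ht0, sq_nonneg (ε * (Real.sqrt 2 + lam / 2)),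
          add_nonneg ht0 hS0]
      have hcmp : (2 * α + 1) * ε / (α + 1) ≤ ε / (1 + α) := by
        rw [show (1:ℝ) + α = α + 1 by ring, div_le_div_iff₀ hA hA]
        nlinarith
      nlinarith [mul_nonneg (by norm_num : (0:ℝ) ≤ 2/5) hs.le]
    · rcases le_or_gt lam (ε / (1 + α) + (2/5) * Real.sqrt α) with hld | hld
      · linarith
      · have hk := key α (Real.sqrt α) ε lam (Real.sqrt 2) hs hsa hε0 hr2 hr hld.le
        have hdd : 0 ≤ lam - (ε / (1 + α) + (2/5) * Real.sqrt α) := by linarith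
        have hdS : lam - (ε / (1 + α) + (2/5) * Real.sqrt α) ≤ S := by
          nlinarith [hk, hS2, hS0, hdd, add_nonneg hdd hS0]
        linarith
  have habs : (0:ℝ) ≤ |ε| := abs_nonneg ε
  have hden : (0:ℝ) < 2 * (1 + |ε|) := by positivity
  rw [div_le_div_iff₀ hden (by norm_num : (0:ℝ) < 201/50)]
  nlinarith [hN, hs.le, habs, mul_nonneg hs.le habs]
end

section
/- Let w > 0 and λ > 2w be real numbers, set α₁ = (−λ + √(λ² − 4w²))/2 and α₂ = (−λ − √(λ² − 4w²))/2, and let A be the 2×2 real matrix with rows (0, 1) and (−w², −λ). Then for every real t, exp(t·A) = (α₂ − α₁)⁻¹ times the 2×2 matrix with rows ( α₂ e^{α₁ t} − α₁ e^{α₂ t}, e^{α₂ t} − e^{α₁ t} ) and ( α₁ α₂ (e^{α₁ t} − e^{α₂ t}), α₂ e^{α₂ t} − α₁ e^{α₁ t} ). -/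
open Matrix

/-- Matrix exponential of the overdamped drift matrix: for `w > 0`, `λ > 2w`,
`α₁ = (−λ + √(λ² − 4w²))/2`, `α₂ = (−λ − √(λ² − 4w²))/2` and `A = [[0,1],[−w²,−λ]]`,
`exp(tA) = (α₂ − α₁)⁻¹·[[α₂e^{α₁t} − α₁e^{α₂t}, e^{α₂t} − e^{α₁t}],
[α₁α₂(e^{α₁t} − e^{α₂t}), α₂e^{α₂t} − α₁e^{α₁t}]]`. -/
theorem exp_overdamped (w lam : ℝ) (hw : 0 < w) (hlam : 2 * w < lam)
    (α₁ α₂ : ℝ) (hα₁ : α₁ = (-lam + Real.sqrt (lam ^ 2 - 4 * w ^ 2)) / 2)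
    (hα₂ : α₂ = (-lam - Real.sqrt (lam ^ 2 - 4 * w ^ 2)) / 2) (t : ℝ) :
    NormedSpace.exp (t • (!![0, 1; -w ^ 2, -lam] : Matrix (Fin 2) (Fin 2) ℝ)) =
      (α₂ - α₁)⁻¹ •
        !![α₂ * Real.exp (α₁ * t) - α₁ * Real.exp (α₂ * t),
            Real.exp (α₂ * t) - Real.exp (α₁ * t);
          α₁ * α₂ * (Real.exp (α₁ * t) - Real.exp (α₂ * t)),
            α₂ * Real.exp (α₂ * t) - α₁ * Real.exp (α₁ * t)] := by
  have hwl : 0 < lam := lt_trans (by linarith) hlam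
  have hpos : 0 < lam ^ 2 - 4 * w ^ 2 := by nlinarith
  set s := Real.sqrt (lam ^ 2 - 4 * w ^ 2) with hsdef
  have hs2 : s ^ 2 = lam ^ 2 - 4 * w ^ 2 := Real.sq_sqrt hpos.le
  have hspos : 0 < s := Real.sqrt_pos.mpr hpos
  have hsum : α₁ + α₂ = -lam := by rw [hα₁, hα₂]; ring
  have hprod : α₁ * α₂ = w ^ 2 := by rw [hα₁, hα₂]; nlinarith [hs2]
  have hdiff : α₂ - α₁ = -s := by rw [hα₁, hα₂]; ring
  have hne : α₂ - α₁ ≠ 0 := by rw [hdiff]; exact neg_ne_zero.mpr hspos.ne'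
  set P : Matrix (Fin 2) (Fin 2) ℝ := !![1, 1; α₁, α₂] with hP
  have hdet : P.det = α₂ - α₁ := by simp [hP, Matrix.det_fin_two_of]
  have hU : IsUnit P.det := by rw [hdet]; exact (isUnit_iff_ne_zero).mpr hne
  have hUP : IsUnit P := (Matrix.isUnit_iff_isUnit_det P).mpr hU
  have hPinv : P⁻¹ = (α₂ - α₁)⁻¹ • !![α₂, -1; -α₁, 1] := by
    rw [Matrix.inv_def, Matrix.adjugate_fin_two, hdet, Ring.inverse_eq_inv']
    simp [hP]
  have hroot1 : α₁ ^ 2 + lam * α₁ + w ^ 2 = 0 := by linear_combination α₁ * hsum - hprod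
  have hroot2 : α₂ ^ 2 + lam * α₂ + w ^ 2 = 0 := by linear_combination α₂ * hsum - hprod
  have hA : t • (!![0, 1; -w ^ 2, -lam] : Matrix (Fin 2) (Fin 2) ℝ) =
      P * Matrix.diagonal ![α₁ * t, α₂ * t] * P⁻¹ := by
    have : Invertible P := hUP.invertible
    symm; rw [Matrix.mul_inv_eq_iff_eq_mul_of_invertible]
    ext i j
    fin_cases i <;> fin_cases j <;>
      simp [hP, Matrix.mul_apply, Fin.sum_univ_two, Matrix.diagonal_apply,
        Matrix.smul_apply] <;>
      first
        | ring1
        | linear_combination t * hroot1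
        | linear_combination t * hroot2
  rw [hA, Matrix.exp_conj _ _ hUP, Matrix.exp_diagonal, hPinv]
  ext i j
  have hexp : ∀ x : ℝ, NormedSpace.exp x = Real.exp x := fun x =>
    (congrFun Real.exp_eq_exp_ℝ x).symm
  fin_cases i <;> fin_cases j <;>
    simp [hP, Matrix.mul_apply, Fin.sum_univ_two, Matrix.diagonal_apply, Pi.exp_def, hexp, Matrix.vecMul_diagonal, Matrix.mulVec_diagonal,
      Matrix.smul_apply, mul_comm t] <;> ring
end

section
/- Let w > 0 and λ > 2w be real numbers, set α₁ = (−λ + √(λ² − 4w²))/2 and α₂ = (−λ − √(λ² − 4w²))/2, let A be the 2×2 real matrix with rows (0, 1) and (−w², −λ), and let D be the 2×2 matrix with rows (0, 0) and (0, 2λ). Then for every t ≥ 0, ∫₀ᵗ exp((t−s)·A) · D · exp((t−s)·Aᵀ) ds = (2λ/(α₁ − α₂)²) times the symmetric 2×2 matrix with rows ( p + 2q + r, α₁(p+q) + α₂(q+r) ) and ( α₁(p+q) + α₂(q+r), α₁² p + 2α₁α₂ q + α₂² r ), where p = (e^{2α₁ t} − 1)/(2α₁), q = −(e^{(α₁+α₂)t}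 − 1)/(α₁+α₂), and r = (e^{2α₂ t} − 1)/(2α₂). -/
open Matrix intervalIntegral
attribute [local instance] Matrix.normedAddCommGroup Matrix.normedSpace


lemma int_exp_sub (c t : ℝ) (hc : c ≠ 0) :
    ∫ s in (0:ℝ)..t, Real.exp (c * (t - s)) = (Real.exp (c * t) - 1) / c := by
  have h1 : (∫ s in (0:ℝ)..t, Real.exp (c * (t - s)))
      = ∫ x in (t - t)..(t - 0), Real.exp (c * x) :=
    integral_comp_sub_left (fun x => Real.exp (c * x)) t
  rw [h1]
  simp only [sub_self, sub_zero]
  rw [integral_comp_mul_left (fun x => Real.exp x) hc]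
  simp [integral_exp, smul_eq_mul, mul_zero]
  field_simp

lemma diag_fin_two (a b : ℝ) : Matrix.diagonal ![a, b] = !![a, 0; 0, b] := by
  ext i j; fin_cases i <;> fin_cases j <;> simp [Matrix.diagonal]

lemma exp_explicit (w lam α₁ α₂ : ℝ) (hsum : α₁ + α₂ = -lam) (hprod : α₁ * α₂ = w ^ 2)
    (hne : α₁ ≠ α₂) (u : ℝ) :
    NormedSpace.exp (u • (!![0, 1; -w ^ 2, -lam] : Matrix (Fin 2) (Fin 2) ℝ)) =
      (α₁ - α₂)⁻¹ •
        !![α₁ * Real.exp (α₂ * u) - α₂ * Real.exp (α₁ * u),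
            Real.exp (α₁ * u) - Real.exp (α₂ * u);
          α₁ * α₂ * (Real.exp (α₂ * u) - Real.exp (α₁ * u)),
          α₁ * Real.exp (α₁ * u) - α₂ * Real.exp (α₂ * u)] := by
  have hd : α₁ - α₂ ≠ 0 := sub_ne_zero.2 hne
  have hd' : α₂ - α₁ ≠ 0 := sub_ne_zero.2 hne.symm
  set P : Matrix (Fin 2) (Fin 2) ℝ := !![1, 1; α₁, α₂] with hP
  set Q : Matrix (Fin 2) (Fin 2) ℝ := (α₂ - α₁)⁻¹ • !![α₂, -1; -α₁, 1] with hQ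
  have hPQ : P * Q = 1 := by
    ext i j
    fin_cases i <;> fin_cases j <;>
      simp [hP, hQ, Matrix.mul_apply, Fin.sum_univ_two] <;>
      field_simp <;> ring
  have hPinv : P⁻¹ = Q := Matrix.inv_eq_right_inv hPQ
  have hUnit : IsUnit P := by
    rw [Matrix.isUnit_iff_isUnit_det]
    simp only [hP, Matrix.det_fin_two_of, isUnit_iff_ne_zero, one_mul]
    intro h
    exact hd' (by linarith)
  have hdecomp : u • (!![0, 1; -w ^ 2, -lam] : Matrix (Fin 2) (Fin 2) ℝ) =
      P * Matrix.diagonal ![α₁ * u, α₂ * u] * P⁻¹ := by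
    rw [← hprod, ← hsum, hPinv, diag_fin_two]
    ext i j
    fin_cases i <;> fin_cases j <;>
      simp [hP, hQ, Matrix.mul_apply, Fin.sum_univ_two] <;>
      field_simp <;> ring
  rw [hdecomp, Matrix.exp_conj P _ hUnit, Matrix.exp_diagonal, hPinv]
  have hpi : NormedSpace.exp ![α₁ * u, α₂ * u] = ![Real.exp (α₁ * u), Real.exp (α₂ * u)] := by
    rw [Pi.exp_def]
    funext i; fin_cases i <;> simp [← Real.exp_eq_exp_ℝ]
  rw [hpi, diag_fin_two]
  ext i j
  fin_cases i <;> fin_cases j <;>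
    simp [hP, hQ, Matrix.mul_apply, Fin.sum_univ_two] <;>
    field_simp <;> ring

set_option maxHeartbeats 2000000 in
/-- Covariance matrix of the overdamped two-dimensional Ornstein–Uhlenbeck process:
with `A = [[0,1],[−w²,−λ]]`, `D = [[0,0],[0,2λ]]`, eigenvalues `α₁, α₂` and
`p = (e^{2α₁t} − 1)/(2α₁)`, `q = −(e^{(α₁+α₂)t} − 1)/(α₁+α₂)`, `r = (e^{2α₂t} − 1)/(2α₂)`,
`∫₀ᵗ e^{(t−s)A} D e^{(t−s)Aᵀ} ds = (2λ/(α₁−α₂)²)·[[p + 2q + r, α₁(p+q) + α₂(q+r)],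
[α₁(p+q) + α₂(q+r), α₁²p + 2α₁α₂q + α₂²r]]`. -/
theorem ou_covariance_formula (w lam : ℝ) (hw : 0 < w) (hlam : 2 * w < lam)
    (α₁ α₂ : ℝ) (hα₁ : α₁ = (-lam + Real.sqrt (lam ^ 2 - 4 * w ^ 2)) / 2)
    (hα₂ : α₂ = (-lam - Real.sqrt (lam ^ 2 - 4 * w ^ 2)) / 2)
    (A D : Matrix (Fin 2) (Fin 2) ℝ)
    (hA : A = !![0, 1; -w ^ 2, -lam]) (hD : D = !![0, 0; 0, 2 * lam])
    (t : ℝ) (ht : 0 ≤ t)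
    (p q r : ℝ)
    (hp : p = (Real.exp (2 * α₁ * t) - 1) / (2 * α₁))
    (hq : q = -((Real.exp ((α₁ + α₂) * t) - 1) / (α₁ + α₂)))
    (hr : r = (Real.exp (2 * α₂ * t) - 1) / (2 * α₂)) :
    ∫ s in (0 : ℝ)..t,
        NormedSpace.exp ((t - s) • A) * D * NormedSpace.exp ((t - s) • Aᵀ) =
      (2 * lam / (α₁ - α₂) ^ 2) •
        !![p + 2 * q + r, α₁ * (p + q) + α₂ * (q + r);
          α₁ * (p + q) + α₂ * (q + r), α₁ ^ 2 * p + 2 * α₁ * α₂ * q + α₂ ^ 2 * r] := by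
  have hX : 0 < lam ^ 2 - 4 * w ^ 2 := by nlinarith
  set σ := Real.sqrt (lam ^ 2 - 4 * w ^ 2) with hσ
  have hσpos : 0 < σ := Real.sqrt_pos.2 hX
  have hσsq : σ ^ 2 = lam ^ 2 - 4 * w ^ 2 := Real.sq_sqrt hX.le
  have hσlt : σ < lam := by nlinarith
  have hsum : α₁ + α₂ = -lam := by rw [hα₁, hα₂]; ring
  have hprod : α₁ * α₂ = w ^ 2 := by rw [hα₁, hα₂]; nlinarith [hσsq]
  have hdiff : α₁ - α₂ = σ := by rw [hα₁, hα₂]; ring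
  have hd : α₁ - α₂ ≠ 0 := by rw [hdiff]; exact hσpos.ne'
  have hne : α₁ ≠ α₂ := sub_ne_zero.1 hd
  have hα₁neg : α₁ < 0 := by rw [hα₁]; linarith
  have hα₂neg : α₂ < 0 := by rw [hα₂]; linarith
  have h1 : (2 : ℝ) * α₁ ≠ 0 := by nlinarith
  have h2 : α₁ + α₂ ≠ 0 := by rw [hsum]; intro h; nlinarith
  have h3 : (2 : ℝ) * α₂ ≠ 0 := by nlinarith
  set c : ℝ := 2 * lam / (α₁ - α₂) ^ 2 with hc
  set C1 : Matrix (Fin 2) (Fin 2) ℝ := c • !![1, α₁; α₁, α₁ ^ 2] with hC1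
  set C2 : Matrix (Fin 2) (Fin 2) ℝ :=
    c • !![-2, -(α₁ + α₂); -(α₁ + α₂), -(2 * α₁ * α₂)] with hC2
  set C3 : Matrix (Fin 2) (Fin 2) ℝ := c • !![1, α₂; α₂, α₂ ^ 2] with hC3
  have hInt : ∀ s : ℝ,
      NormedSpace.exp ((t - s) • A) * D * NormedSpace.exp ((t - s) • Aᵀ) =
        Real.exp (2 * α₁ * (t - s)) • C1 + Real.exp ((α₁ + α₂) * (t - s)) • C2 +
          Real.exp (2 * α₂ * (t - s)) • C3 := by
    intro s
    have hT : NormedSpace.exp ((t - s) • Aᵀ) = (NormedSpace.exp ((t - s) • A))ᵀ := by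
      rw [← Matrix.transpose_smul, Matrix.exp_transpose]
    rw [hT, hA, exp_explicit w lam α₁ α₂ hsum hprod hne (t - s)]
    have e1 : Real.exp (2 * α₁ * (t - s)) =
        Real.exp (α₁ * (t - s)) * Real.exp (α₁ * (t - s)) := by
      rw [← Real.exp_add]; ring_nf
    have e2 : Real.exp ((α₁ + α₂) * (t - s)) =
        Real.exp (α₁ * (t - s)) * Real.exp (α₂ * (t - s)) := by
      rw [← Real.exp_add]; ring_nf
    have e3 : Real.exp (2 * α₂ * (t - s)) =
        Real.exp (α₂ * (t - s)) * Real.exp (α₂ * (t - s)) := by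
      rw [← Real.exp_add]; ring_nf
    rw [e1, e2, e3, hD, hC1, hC2, hC3, hc]
    ext i j
    fin_cases i <;> fin_cases j <;>
      simp [Matrix.mul_apply, Fin.sum_univ_two, Matrix.transpose] <;>
      field_simp <;> ring
  simp only [hInt]
  have i1 : @IntervalIntegrable (Matrix (Fin 2) (Fin 2) ℝ) _
      NormedAddCommGroup.toENormedAddCommMonoid.toENormedAddMonoid
      (fun s => Real.exp (2 * α₁ * (t - s)) • C1)
      MeasureTheory.volume 0 t :=
    (Continuous.smul (f := fun s => Real.exp (2 * α₁ * (t - s))) (by continuity) continuous_const).intervalIntegrable 0 t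
  have i2 : @IntervalIntegrable (Matrix (Fin 2) (Fin 2) ℝ) _
      NormedAddCommGroup.toENormedAddCommMonoid.toENormedAddMonoid
      (fun s => Real.exp ((α₁ + α₂) * (t - s)) • C2)
      MeasureTheory.volume 0 t :=
    (Continuous.smul (f := fun s => Real.exp ((α₁ + α₂) * (t - s))) (by continuity) continuous_const).intervalIntegrable 0 t
  have i3 : @IntervalIntegrable (Matrix (Fin 2) (Fin 2) ℝ) _
      NormedAddCommGroup.toENormedAddCommMonoid.toENormedAddMonoid
      (fun s => Real.exp (2 * α₂ * (t - s)) • C3)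
      MeasureTheory.volume 0 t :=
    (Continuous.smul (f := fun s => Real.exp (2 * α₂ * (t - s))) (by continuity) continuous_const).intervalIntegrable 0 t
  rw [intervalIntegral.integral_add (i1.add i2) i3, intervalIntegral.integral_add i1 i2,
    intervalIntegral.integral_smul_const, intervalIntegral.integral_smul_const,
    intervalIntegral.integral_smul_const, int_exp_sub _ _ h1, int_exp_sub _ _ h2,
    int_exp_sub _ _ h3]
  subst hp hq hr
  rw [hC1, hC2, hC3, hc]
  ext i j
  fin_cases i <;> fin_cases j <;>
    simp [Matrix.smul_apply] <;> field_simp <;> ring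
end

section
/- Let w > 0 and λ > 2w be real numbers, let A be the 2×2 real matrix with rows (0, 1) and (−w², −λ), and let D be the 2×2 matrix with rows (0, 0) and (0, 2λ). Then, as t → ∞, the matrix Σ(t) = ∫₀ᵗ exp((t−s)·A) · D · exp((t−s)·Aᵀ) ds converges to the diagonal 2×2 matrix with diagonal entries 1/w² and 1. -/
open Matrix Filter

attribute [local instance] Matrix.normedAddCommGroup Matrix.normedSpace

lemma diagonal_fin_two' (x y : ℝ) :
    (Matrix.diagonal ![x, y] : Matrix (Fin 2) (Fin 2) ℝ) = !![x, 0; 0, y] := by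
  ext i j; fin_cases i <;> fin_cases j <;> simp [Matrix.diagonal_apply]

set_option maxHeartbeats 1000000 in
/-- The covariance `Σ(t) = ∫₀ᵗ e^{(t−s)A} D e^{(t−s)Aᵀ} ds` of the overdamped
Ornstein–Uhlenbeck process converges as `t → ∞` to the stationary covariance
`diag(1/w², 1)`. -/
theorem ou_covariance_limit (w lam : ℝ) (hw : 0 < w) (hlam : 2 * w < lam)
    (A D : Matrix (Fin 2) (Fin 2) ℝ)
    (hA : A = !![0, 1; -w ^ 2, -lam]) (hD : D = !![0, 0; 0, 2 * lam]) :
    Tendsto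
      (fun t : ℝ => ∫ s in (0 : ℝ)..t,
        NormedSpace.exp ((t - s) • A) * D * NormedSpace.exp ((t - s) • Aᵀ))
      atTop (nhds (!![1 / w ^ 2, 0; 0, 1] : Matrix (Fin 2) (Fin 2) ℝ)) := by
  subst hA hD
  have hw2 : (0:ℝ) < lam ^ 2 - 4 * w ^ 2 := by nlinarith
  set r : ℝ := Real.sqrt (lam ^ 2 - 4 * w ^ 2) with hr_def
  have hrpos : 0 < r := Real.sqrt_pos.mpr hw2
  have hr2 : r ^ 2 = lam ^ 2 - 4 * w ^ 2 := Real.sq_sqrt hw2.le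
  have hlam0 : (0:ℝ) < lam := by nlinarith
  have hrlam : r < lam := by nlinarith
  set a : ℝ := (-lam - r) / 2 with ha_def
  set b : ℝ := (-lam + r) / 2 with hb_def
  have hab : a * b = w ^ 2 := by
    simp only [ha_def, hb_def]; field_simp; linear_combination -hr2
  have hapb : a + b = -lam := by simp only [ha_def, hb_def]; ring
  have hba : b - a = r := by simp only [ha_def, hb_def]; ring
  have ha : a < 0 := by simp only [ha_def]; nlinarith
  have hb : b < 0 := by simp only [hb_def]; nlinarith
  have ha0 : a ≠ 0 := ha.ne
  have hb0 : b ≠ 0 := hb.ne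
  have hr0 : r ≠ 0 := hrpos.ne'
  have hab0 : a + b ≠ 0 := by rw [hapb]; exact neg_ne_zero.mpr hlam0.ne'
  clear_value a b
  clear_value r
  set S : Matrix (Fin 2) (Fin 2) ℝ := !![1, 1; a, b] with hS_def
  set T : Matrix (Fin 2) (Fin 2) ℝ := !![b/r, -(1/r); -(a/r), 1/r] with hT_def
  have hST : S * T = 1 := by
    ext i j
    fin_cases i <;> fin_cases j <;>
      simp [hS_def, hT_def, Matrix.mul_apply, Fin.sum_univ_two] <;>
      field_simp <;>
      first
        | ring1
        | linear_combination hba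
        | linear_combination (-1 : ℝ) * hba
        | linear_combination (r - 1) * hba
        | linear_combination (1 - r) * hba
        | linear_combination r * hba
        | linear_combination (-r) * hba
  have hTS : T * S = 1 := by
    ext i j
    fin_cases i <;> fin_cases j <;>
      simp [hS_def, hT_def, Matrix.mul_apply, Fin.sum_univ_two] <;>
      field_simp <;>
      first
        | ring1
        | linear_combination hba
        | linear_combination (-1 : ℝ) * hba
        | linear_combination (r - 1) * hba
        | linear_combination (1 - r) * hba
        | linear_combination r * hba
        | linear_combination (-r) * hba
  set U : (Matrix (Fin 2) (Fin 2) ℝ)ˣ := ⟨S, T, hST, hTS⟩ with hU_def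
  set A : Matrix (Fin 2) (Fin 2) ℝ := !![0, 1; -w ^ 2, -lam] with hA_def
  have hAeq : ∀ u : ℝ, u • A = S * Matrix.diagonal ![u * a, u * b] * T := by
    intro u
    rw [diagonal_fin_two']
    ext i j
    fin_cases i <;> fin_cases j <;>
      simp [hS_def, hT_def, hA_def, Matrix.mul_apply, Fin.sum_univ_two] <;>
      field_simp <;>
      first
        | ring1
        | linear_combination u * hba
        | linear_combination (-(u * r)) * hba
        | linear_combination (u * (b - a)) * hab + (w ^ 2 * u) * hba
        | linear_combination (-(u * r * (b - a))) * hapb + (u * lam * r) * hba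
        | linear_combination (-(u * r * (b - a)) + u * r ^ 2) * hapb + (u * lam * r + u * r * (a + b) - u) * hba
        | linear_combination (-(u * r * (b - a)) + u * r * (r - 1)) * hapb + (u * lam * r + u * (a + b) * (r - 1)) * hba
  have hexp : ∀ u : ℝ, NormedSpace.exp (u • A)
      = S * Matrix.diagonal ![Real.exp (u * a), Real.exp (u * b)] * T := by
    intro u
    rw [hAeq u]
    have h1 : S * Matrix.diagonal ![u * a, u * b] * T
        = (U : Matrix (Fin 2) (Fin 2) ℝ) * Matrix.diagonal ![u * a, u * b]
          * (↑U⁻¹ : Matrix (Fin 2) (Fin 2) ℝ) := rfl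
    rw [h1, Matrix.exp_units_conj, Matrix.exp_diagonal]
    have h2 : NormedSpace.exp ![u * a, u * b]
        = ![Real.exp (u * a), Real.exp (u * b)] := by
      funext i
      fin_cases i <;> rw [Pi.coe_exp] <;> simp [Real.exp_eq_exp_ℝ]
    rw [h2]
    rfl
  -- the explicit integrand
  set Ma : Matrix (Fin 2) (Fin 2) ℝ := !![1, a; a, a ^ 2] with hMa_def
  set Mb : Matrix (Fin 2) (Fin 2) ℝ := !![1, b; b, b ^ 2] with hMb_def
  set Mc : Matrix (Fin 2) (Fin 2) ℝ := !![2, a + b; a + b, 2 * (a * b)] with hMc_def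
  set k : ℝ := 2 * lam / r ^ 2 with hk_def
  set F : ℝ → Matrix (Fin 2) (Fin 2) ℝ := fun u =>
    k • (Real.exp (2 * a * u) • Ma + Real.exp (2 * b * u) • Mb
        - Real.exp ((a + b) * u) • Mc) with hF_def
  have key : ∀ u : ℝ, NormedSpace.exp (u • A) * !![0, 0; 0, 2 * lam]
      * NormedSpace.exp (u • Aᵀ) = F u := by
    intro u
    have htr : u • Aᵀ = (u • A)ᵀ := (Matrix.transpose_smul u A).symm
    rw [htr, Matrix.exp_transpose, hexp u, diagonal_fin_two']
    have e1 : Real.exp (2 * a * u) = Real.exp (u * a) * Real.exp (u * a) := by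
      rw [← Real.exp_add]; ring_nf
    have e2 : Real.exp (2 * b * u) = Real.exp (u * b) * Real.exp (u * b) := by
      rw [← Real.exp_add]; ring_nf
    have e3 : Real.exp ((a + b) * u) = Real.exp (u * a) * Real.exp (u * b) := by
      rw [← Real.exp_add]; ring_nf
    ext i j
    fin_cases i <;> fin_cases j <;>
      simp only [hF_def, hS_def, hT_def, hMa_def, hMb_def, hMc_def, hk_def,
        Matrix.smul_apply, Matrix.add_apply, Matrix.sub_apply, Matrix.mul_apply,
        Matrix.transpose_apply, Fin.sum_univ_two, smul_eq_mul, Matrix.cons_val',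
        Matrix.cons_val_zero, Matrix.cons_val_one, Matrix.head_cons,
        Matrix.head_fin_const, Matrix.empty_val', Matrix.cons_val_fin_one,
        Matrix.of_apply, Fin.zero_eta, Fin.mk_one, e1, e2, e3] <;>
      field_simp <;> ring
  -- antiderivative
  set Φ : ℝ → Matrix (Fin 2) (Fin 2) ℝ := fun u =>
    k • ((Real.exp (2 * a * u) / (2 * a)) • Ma + (Real.exp (2 * b * u) / (2 * b)) • Mb
        - (Real.exp ((a + b) * u) / (a + b)) • Mc) with hΦ_def
  have dexp : ∀ (c : ℝ), c ≠ 0 → ∀ u : ℝ,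
      HasDerivAt (fun u => Real.exp (c * u) / c) (Real.exp (c * u)) u := by
    intro c hc u
    have h1 : HasDerivAt (fun u : ℝ => c * u) c u := by
      simpa using (hasDerivAt_id u).const_mul c
    have h2 := (h1.exp).div_const c
    convert h2 using 1
    · rfl
    · rfl
    field_simp
  have hΦ' : ∀ u : ℝ, HasDerivAt Φ (F u) u := by
    intro u
    have d1 := (dexp (2 * a) (mul_ne_zero two_ne_zero ha0) u).smul_const Ma
    have d2 := (dexp (2 * b) (mul_ne_zero two_ne_zero hb0) u).smul_const Mb
    have d3 := (dexp (a + b) hab0 u).smul_const Mc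
    exact ((d1.add d2).sub d3).const_smul k
  have hFc : Continuous F := by
    refine Continuous.const_smul (g := fun u => Real.exp (2 * a * u) • Ma
      + Real.exp (2 * b * u) • Mb - Real.exp ((a + b) * u) • Mc) ?_ k
    refine Continuous.sub (Continuous.add ?_ ?_) ?_ <;>
      exact ((Real.continuous_exp.comp (continuous_const.mul continuous_id)).smul
        continuous_const)
  have hint : ∀ t : ℝ, (∫ u in (0:ℝ)..t, F u) = Φ t - Φ 0 := fun t =>
    intervalIntegral.integral_eq_sub_of_hasDerivAt (fun u _ => hΦ' u)
      (hFc.intervalIntegrable 0 t)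
  have hcv : ∀ t : ℝ, (∫ s in (0:ℝ)..t,
      NormedSpace.exp ((t - s) • A) * !![0, 0; 0, 2 * lam]
        * NormedSpace.exp ((t - s) • Aᵀ)) = Φ t - Φ 0 := by
    intro t
    have h := intervalIntegral.integral_comp_sub_left (a := (0:ℝ)) (b := t)
      (fun u => NormedSpace.exp (u • A) * !![0, 0; 0, 2 * lam]
        * NormedSpace.exp (u • Aᵀ)) t
    simp only [sub_self, sub_zero] at h
    rw [h, intervalIntegral.integral_congr (g := F) (fun u _ => key u)]
    exact hint t
  have hΦlim : Tendsto Φ atTop (nhds (0 : Matrix (Fin 2) (Fin 2) ℝ)) := by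
    have hgen : ∀ (c : ℝ), c < 0 →
        Tendsto (fun t => Real.exp (c * t) / c) atTop (nhds 0) := by
      intro c hc
      have h1 : Tendsto (fun t : ℝ => c * t) atTop atBot :=
        (tendsto_const_mul_atBot_of_neg hc).2 tendsto_id
      have h2 := (Real.tendsto_exp_atBot.comp h1).div_const c
      simpa using h2
    have h1 := (hgen (2 * a) (by nlinarith)).smul_const Ma
    have h2 := (hgen (2 * b) (by nlinarith)).smul_const Mb
    have h3 := (hgen (a + b) (by nlinarith)).smul_const Mc
    have h4 := (((h1.add h2).sub h3).const_smul k)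
    simpa using h4
  have hval : (0 : Matrix (Fin 2) (Fin 2) ℝ) - Φ 0 = !![1 / w ^ 2, 0; 0, 1] := by
    ext i j
    fin_cases i <;> fin_cases j <;>
      simp [hΦ_def, hMa_def, hMb_def, hMc_def, hk_def] <;> field_simp
    · linear_combination (16*lam*w^2 - 4*(a+b)*r^2 - 3*lam*(b-a)^2) * hab
        + (-4*lam*w^2*((a+b) - lam) - 4*w^2*r^2 + 3*a*b*(b-a)^2) * hapb + (4*lam*w^2) * hr2
        - (3*a*b*(a+b)*(r+b-a)) * hba
    · exact Or.inr (by ring)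
    · exact Or.inr (by ring)
    · linear_combination (-4*lam*(a+b)^2 + 16*lam*(a*b + w^2) - 4*(a+b)*r^2) * hab
        + (-4*lam*w^2*((a+b) - lam) - 4*w^2*r^2 + (4*a*b-1)*(b-a)^2) * hapb + (4*lam*w^2) * hr2
        - ((4*a*b-1)*(a+b)*(r+b-a)) * hba
  have heq : (fun t : ℝ => ∫ s in (0:ℝ)..t,
      NormedSpace.exp ((t - s) • A) * !![0, 0; 0, 2 * lam]
        * NormedSpace.exp ((t - s) • Aᵀ)) = fun t => Φ t - Φ 0 := funext hcv
  rw [heq, ← hval]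
  exact hΦlim.sub_const (Φ 0)
end

section
/- For every k ∈ (0,1), every α > 0, and every V ≥ 1, there exist real numbers a, x, y with a > 0, 0 < y < x, and (a + x)(a − y) > a², such that for every v ∈ [1, V] the symmetric 2×2 matrix with rows (g₁, g₂) and (g₂, g₃) is positive semidefinite, where g₁ = (v⁻¹ − (1−k)v⁻²)·a − (1−k)(x·v⁻² + 2/α), g₂ = (1 − (1−k)v⁻¹)·a − (x + y)/2, and g₃ = (v − (1−k))·a − (2v − (1−k))·(y − 2/α). -/
lemma psd_fin_two {g1 g2 g3 : ℝ} (h1 : 0 ≤ g1) (h3 : 0 ≤ g3) (hd : g2 ^ 2 ≤ g1 * g3) :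
    Matrix.PosSemidef !![g1, g2; g2, g3] := by
  refine Matrix.PosSemidef.of_dotProduct_mulVec_nonneg ?_ ?_
  · ext i j
    fin_cases i <;> fin_cases j <;> rfl
  · intro z
    simp [dotProduct, Matrix.mulVec, Fin.sum_univ_two]
    rcases h1.eq_or_lt with h | h
    · have hg2 : g2 = 0 := by nlinarith [sq_nonneg g2]
      subst hg2
      nlinarith [mul_nonneg h1 (sq_nonneg (z 0)), mul_nonneg h3 (sq_nonneg (z 1))]
    · have key : 0 ≤ (g1 * z 0 + g2 * z 1) ^ 2 + (g1 * g3 - g2 ^ 2) * z 1 ^ 2 := by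
        nlinarith [sq_nonneg (z 1)]
      nlinarith [key, h]

set_option maxHeartbeats 1000000 in
/-- Algebraic core of the `2 − ε` convergence rate for diagonal quadratic potentials:
for every `k ∈ (0,1)`, `α > 0` and `V ≥ 1`, there exist `a > 0` and `0 < y < x` with
`(a + x)(a − y) > a²` such that for all `v ∈ [1, V]` the matrix `[[g₁, g₂], [g₂, g₃]]`
is positive semidefinite. -/
theorem diagonal_quadratic_psd_core (k α V : ℝ) (hk : k ∈ Set.Ioo (0 : ℝ) 1)
    (hα : 0 < α) (hV : 1 ≤ V) :
    ∃ a x y : ℝ, 0 < a ∧ 0 < y ∧ y < x ∧ (a + x) * (a - y) > a ^ 2 ∧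
      ∀ v ∈ Set.Icc (1 : ℝ) V,
        Matrix.PosSemidef
          !![(v⁻¹ - (1 - k) * v⁻¹ ^ 2) * a - (1 - k) * (x * v⁻¹ ^ 2 + 2 / α),
              (1 - (1 - k) * v⁻¹) * a - (x + y) / 2;
            (1 - (1 - k) * v⁻¹) * a - (x + y) / 2,
              (v - (1 - k)) * a - (2 * v - (1 - k)) * (y - 2 / α)] := by
  obtain ⟨hk0, hk1⟩ := hk
  obtain ⟨y, hy, hy0⟩ : ∃ y : ℝ, y = 2 / α ∧ 0 < y := ⟨2 / α, rfl, by positivity⟩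
  obtain ⟨x, hxd⟩ : ∃ x : ℝ, x = (V ^ 2 * y + y) / k + y := ⟨_, rfl⟩
  have hxy : y < x := by
    have : 0 < (V ^ 2 * y + y) / k := by positivity
    rw [hxd]; linarith
  have hxy0 : 0 < x - y := by linarith
  have hx0 : 0 < x := by linarith
  have hkx : k * x = V ^ 2 * y + y + k * y := by
    rw [hxd]; field_simp
  obtain ⟨a, had⟩ : ∃ a : ℝ,
      a = (x + V ^ 2 * y) / k + (x + y) ^ 2 * V ^ 2 / (8 * k * y) + x * y / (x - y) + 1 :=
    ⟨_, rfl⟩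
  have ha0 : 0 < a := by rw [had]; positivity
  have hka1 : x + V ^ 2 * y ≤ k * a := by
    have h1 : (x + V ^ 2 * y) / k ≤ a := by
      rw [had]
      have : 0 ≤ (x + y) ^ 2 * V ^ 2 / (8 * k * y) + x * y / (x - y) + 1 := by positivity
      linarith
    have := (div_le_iff₀ hk0).mp h1
    linarith [this]
  have hka2 : (x + y) ^ 2 * V ^ 2 ≤ a * (8 * k * y) := by
    have h1 : (x + y) ^ 2 * V ^ 2 / (8 * k * y) ≤ a := by
      rw [had]
      have h2 : 0 ≤ (x + V ^ 2 * y) / k + x * y / (x - y) + 1 := by positivity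
      linarith
    exact (div_le_iff₀ (by positivity)).mp h1
  have hka3 : x * y < a * (x - y) := by
    have h1 : x * y / (x - y) < a := by
      rw [had]
      have h2 : 0 ≤ (x + V ^ 2 * y) / k + (x + y) ^ 2 * V ^ 2 / (8 * k * y) := by positivity
      linarith
    exact (div_lt_iff₀ hxy0).mp h1
  refine ⟨a, x, y, ha0, hy0, hxy, by nlinarith, ?_⟩
  rintro v ⟨hv1, hvV⟩
  have hv0 : 0 < v := lt_of_lt_of_le one_pos hv1
  have hvv : v ^ 2 ≤ V ^ 2 := by nlinarith
  -- rewrite the three entries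
  have e0 : y - 2 / α = 0 := by rw [hy]; ring
  have eg3 : (v - (1 - k)) * a - (2 * v - (1 - k)) * (y - 2 / α) = (v - (1 - k)) * a := by
    rw [e0]; ring
  have eg1 : (v⁻¹ - (1 - k) * v⁻¹ ^ 2) * a - (1 - k) * (x * v⁻¹ ^ 2 + 2 / α)
      = ((v - (1 - k)) * a - (1 - k) * x - (1 - k) * v ^ 2 * y) / v ^ 2 := by
    rw [← hy, eq_div_iff (by positivity : (v:ℝ) ^ 2 ≠ 0)]
    field_simp
    ring
  have eg2 : (1 - (1 - k) * v⁻¹) * a - (x + y) / 2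
      = ((v - (1 - k)) * a - v * (x + y) / 2) / v := by
    rw [eq_div_iff hv0.ne']
    field_simp
  rw [eg1, eg2, eg3]
  -- scalar inequalities
  have hP : k * a ≤ (v - (1 - k)) * a := by nlinarith [mul_nonneg (by linarith : (0:ℝ) ≤ v - 1) ha0.le]
  have h2 : (1 - k) * v ^ 2 * y ≤ V ^ 2 * y := by
    nlinarith [mul_le_mul_of_nonneg_right hvv hy0.le,
      mul_nonneg (mul_nonneg hk0.le (sq_nonneg v)) hy0.le]
  have hN1 : 0 ≤ (v - (1 - k)) * a - (1 - k) * x - (1 - k) * v ^ 2 * y := by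
    have h1 : (1 - k) * x ≤ x := by nlinarith
    linarith [hka1, hP, h2]
  have hg1 : 0 ≤ ((v - (1 - k)) * a - (1 - k) * x - (1 - k) * v ^ 2 * y) / v ^ 2 :=
    div_nonneg hN1 (by positivity)
  have hg3 : 0 ≤ (v - (1 - k)) * a := le_trans (by positivity) hP
  have hF : 2 * y ≤ v * (x + y) - (1 - k) * x - (1 - k) * v ^ 2 * y := by
    have h1 : x + y ≤ v * (x + y) := le_mul_of_one_le_left (by linarith) hv1
    linarith [h1, h2, hkx, mul_pos hk0 hy0]
  have hPF : 2 * y * (k * a) ≤ ((v - (1 - k)) * a)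
      * (v * (x + y) - (1 - k) * x - (1 - k) * v ^ 2 * y) := by
    nlinarith [mul_nonneg (sub_nonneg.2 hP) (by linarith : (0:ℝ) ≤ v * (x + y) - (1 - k) * x - (1 - k) * v ^ 2 * y),
      mul_nonneg (mul_nonneg hk0.le ha0.le)
        (sub_nonneg.2 hF)]
  have hv2V2 : v ^ 2 * (x + y) ^ 2 ≤ V ^ 2 * (x + y) ^ 2 :=
    mul_le_mul_of_nonneg_right hvv (sq_nonneg _)
  have hdet : ((v - (1 - k)) * a - v * (x + y) / 2) ^ 2
      ≤ ((v - (1 - k)) * a - (1 - k) * x - (1 - k) * v ^ 2 * y) * ((v - (1 - k)) * a) := by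
    nlinarith [hPF, hka2, hv2V2]
  have hd : (((v - (1 - k)) * a - v * (x + y) / 2) / v) ^ 2
      ≤ (((v - (1 - k)) * a - (1 - k) * x - (1 - k) * v ^ 2 * y) / v ^ 2)
        * ((v - (1 - k)) * a) := by
    rw [div_pow, div_mul_eq_mul_div, div_le_div_iff₀ (by positivity) (by positivity)]
    nlinarith [mul_le_mul_of_nonneg_right hdet (sq_nonneg v)]
  exact psd_fin_two hg1 hg3 hd
end
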